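/- Let M be a matroid of rank r ≥ 2 on n elements with no loops. If for every element e the contraction M/e has at least k independent hyperplanes, then M has at least n·k/(r-1) independent hyperplanes. -/

import Mathlib

open Set

variable {α : Type*}

namespace Matroid

/-- A circuit is a minimal dependent set. -/
def Circuit (M : Matroid α) (C : Set α) : Prop :=
  M.Dep C ∧ ∀ D, M.Dep D → D ⊆ C → D = C

/-- A hyperplane is a maximal proper flat. -/
def Hyperplane (M : Matroid α) (H : Set α) : Prop :=
  M.IsFlat H ∧ H ≠ M.E ∧ ∀ F, M.IsFlat F → H ⊆ F → F = H ∨ F = M.E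

/-- An independent hyperplane is a hyperplane that is an independent set. -/
def IndepHyperplane (M : Matroid α) (H : Set α) : Prop :=
  M.Hyperplane H ∧ M.Indep H

/-- `M` has rank `r` if some (equivalently, every) base has exactly `r` elements. -/
def HasRank (M : Matroid α) (r : ℕ) : Prop :=
  ∃ B, M.IsBase B ∧ B.ncard = r

/-- A matroid of rank `r` is paving if every circuit has `r` or `r + 1` elements. -/
def Paving (M : Matroid α) : Prop :=
  ∀ r, M.HasRank r → ∀ C, M.Circuit C → C.ncard = r ∨ C.ncard = r + 1

/-- `N` is the contraction `M / e` of `M` by a non-loop element `e`. -/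
def IsContractElem (M N : Matroid α) (e : α) : Prop :=
  N.E = M.E \ {e} ∧ ∀ I, N.Indep I ↔ e ∉ I ∧ M.Indep (insert e I)

/-- `M` has no loops. -/
def Loopless' (M : Matroid α) : Prop := ∀ e ∈ M.E, M.Indep {e}

/-- `M` is simple: it has no loops and no parallel elements, i.e. every subset of the
ground set with at most two elements is independent. -/
def Simple' (M : Matroid α) : Prop :=
  ∀ I ⊆ M.E, I.Finite → I.ncard ≤ 2 → M.Indep I

end Matroid

namespace Matroid

lemma aux_flat_of_closure_subset {M : Matroid α} {F : Set α} (hF : F ⊆ M.E)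
    (h : M.closure F ⊆ F) : M.IsFlat F := by
  refine ⟨fun I X hIF hIX => ?_, hF⟩
  refine hIX.subset_closure.trans ?_
  rw [hIF.closure_eq_closure]
  exact h

lemma aux_flat_closure (M : Matroid α) (X : Set α) : M.IsFlat (M.closure X) :=
  aux_flat_of_closure_subset (M.closure_subset_ground X) (by rw [M.closure_closure])

/-- A characterization of hyperplanes in terms of closures. -/
lemma aux_hyperplane_iff {M : Matroid α} {H : Set α} (hH : H ⊆ M.E) :
    M.Hyperplane H ↔ M.IsFlat H ∧ H ≠ M.E ∧
      ∀ f ∈ M.E \ H, M.closure (insert f H) = M.E := by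
  constructor
  · rintro ⟨hf, hne, hmax⟩
    refine ⟨hf, hne, fun f hf' => ?_⟩
    have hins : insert f H ⊆ M.E := insert_subset hf'.1 hH
    have hsub : H ⊆ M.closure (insert f H) :=
      (subset_insert _ _).trans (M.subset_closure _ hins)
    rcases hmax _ (aux_flat_closure M _) hsub with h | h
    · exact absurd (h ▸ (M.subset_closure _ hins) (mem_insert f H)) hf'.2
    · exact h
  · rintro ⟨hf, hne, hmax⟩
    refine ⟨hf, hne, fun F hF hHF => ?_⟩
    by_cases hFH : F = H
    · exact Or.inl hFH
    right
    obtain ⟨f, hfF, hfH⟩ := exists_of_ssubset (hHF.ssubset_of_ne (Ne.symm hFH))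
    have hclE : M.closure (insert f H) = M.E := hmax f ⟨hF.subset_ground hfF, hfH⟩
    have hsub : M.E ⊆ F := by
      rw [← hclE, ← hF.closure]
      exact M.closure_subset_closure (insert_subset hfF hHF)
    exact hF.subset_ground.antisymm hsub

/-- An independent hyperplane of a rank-`r` matroid has `r - 1` elements. -/
lemma aux_indepHyperplane_ncard {M : Matroid α} [M.Finite] {H : Set α} {r : ℕ}
    (hr : M.HasRank r) (hH : M.IndepHyperplane H) :
    H ⊆ M.E ∧ H.Finite ∧ H.ncard + 1 = r := by
  obtain ⟨⟨hf, hne, hmax⟩, hi⟩ := hH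
  have hHE : H ⊆ M.E := hi.subset_ground
  have hHfin : H.Finite := M.set_finite H hHE
  obtain ⟨B, hB, hcard⟩ := hr
  obtain ⟨B', hB', hsub⟩ := hi.exists_isBase_superset
  have hne' : H ≠ B' := by
    intro h
    apply hne
    rw [← hf.closure, h, hB'.closure_eq]
  obtain ⟨f, hfB, hfH⟩ := exists_of_ssubset (hsub.ssubset_of_ne hne')
  have hins : M.Indep (insert f H) := hB'.indep.subset (insert_subset hfB hsub)
  have hHsub : H ⊆ M.closure (insert f H) :=
    (subset_insert _ _).trans (M.subset_closure _ hins.subset_ground)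
  have hclE : M.closure (insert f H) = M.E := by
    rcases hmax _ (aux_flat_closure M _) hHsub with h | h
    · exact absurd (h ▸ (M.subset_closure _ hins.subset_ground) (mem_insert f H)) hfH
    · exact h
  have hbase : M.IsBase (insert f H) := hins.isBase_of_ground_subset_closure hclE.ge
  have hc : (insert f H).ncard = r := by rw [hbase.ncard_eq_ncard_of_isBase hB, hcard]
  rw [ncard_insert_of_notMem hfH hHfin] at hc
  exact ⟨hHE, hHfin, hc⟩

/-- The contraction of a finite matroid by a non-loop element exists. -/
lemma aux_exists_isContractElem (M : Matroid α) [M.Finite] {e : α} (he : M.Indep {e}) :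
    ∃ N : Matroid α, M.IsContractElem N e := by
  have hEfin : (M.E \ {e}).Finite := M.ground_finite.diff
  refine ⟨(IndepMatroid.ofFinite hEfin (fun I => e ∉ I ∧ M.Indep (insert e I))
    ⟨notMem_empty e, by simpa using he⟩
    (fun I J hJ hIJ => ⟨fun h => hJ.1 (hIJ h), hJ.2.subset (insert_subset_insert hIJ)⟩)
    (fun I J hI hJ hIJ => ?_)
    (fun I hI => subset_diff.mpr ⟨(subset_insert e I).trans hI.2.subset_ground,
      disjoint_singleton_right.mpr hI.1⟩)).matroid, by simp, by simp⟩
  have hIfin : I.Finite := M.set_finite I ((subset_insert e I).trans hI.2.subset_ground)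
  have hJfin : J.Finite := M.set_finite J ((subset_insert e J).trans hJ.2.subset_ground)
  have hlt : (insert e I).encard < (insert e J).encard := by
    rw [encard_insert_of_notMem hI.1, encard_insert_of_notMem hJ.1,
      ← hIfin.cast_ncard_eq, ← hJfin.cast_ncard_eq]
    exact_mod_cast (by omega : I.ncard + 1 < J.ncard + 1)
  obtain ⟨x, hx, hxi⟩ := hI.2.augment hJ.2 hlt
  have hxe : x ≠ e := fun h => hx.2 (h ▸ mem_insert _ _)
  have hxJ : x ∈ J := hx.1.resolve_left hxe
  have hxI : x ∉ I := fun h => hx.2 (mem_insert_of_mem _ h)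
  show ∃ y ∈ J, y ∉ I ∧ (e ∉ insert y I ∧ M.Indep (insert e (insert y I)))
  refine ⟨x, hxJ, hxI, ?_, ?_⟩
  · simp only [mem_insert_iff, not_or]
    exact ⟨hxe.symm, hI.1⟩
  · rwa [insert_comm]

/-- Independent hyperplanes of a contraction `M / e` give independent hyperplanes of `M`
containing `e`. -/
lemma aux_contract_indepHyperplane {M N : Matroid α} {e : α} (he : e ∈ M.E)
    (hN : M.IsContractElem N e) {H : Set α} (hH : N.IndepHyperplane H) :
    M.IndepHyperplane (insert e H) := by
  obtain ⟨hNE, hNI⟩ := hN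
  obtain ⟨hHhyp, hHi⟩ := hH
  obtain ⟨hHf, hHne, hHmax⟩ := hHhyp
  obtain ⟨heH, hMi⟩ := (hNI H).mp hHi
  have hHE : H ⊆ M.E \ {e} := hNE ▸ hHf.subset_ground
  have hiE : insert e H ⊆ M.E := insert_subset he (hHE.trans diff_subset)
  -- the closure of `insert e H` is itself
  have hcl : M.closure (insert e H) = insert e H := by
    refine subset_antisymm ?_ (M.subset_closure _ hiE)
    intro g hg
    have hgE : g ∈ M.E := M.closure_subset_ground _ hg
    by_contra hgH
    have hge : g ≠ e := fun h => hgH (h ▸ mem_insert _ _)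
    have hgH' : g ∉ H := fun h => hgH (mem_insert_of_mem _ h)
    have hdep : M.Dep (insert g (insert e H)) := by
      rcases hMi.mem_closure_iff.mp hg with h | h
      · exact h
      · exact absurd h hgH
    have hdepN : N.Dep (insert g H) := by
      rw [dep_iff]
      refine ⟨fun hi => ?_, ?_⟩
      · obtain ⟨-, hi2⟩ := (hNI _).mp hi
        rw [insert_comm] at hi2
        exact hdep.not_indep hi2
      · rw [hNE]; exact insert_subset ⟨hgE, hge⟩ hHE
    have hmem : g ∈ N.closure H := hHi.mem_closure_iff.mpr (Or.inl hdepN)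
    rw [hHf.closure] at hmem
    exact hgH' hmem
  have hne : insert e H ≠ M.E := by
    intro h
    apply hHne
    rw [hNE, ← h]
    exact (insert_diff_self_of_notMem heH).symm
  refine ⟨(aux_hyperplane_iff hiE).mpr
    ⟨aux_flat_of_closure_subset hiE hcl.subset, hne, fun f hf => ?_⟩, hMi⟩
  have hfe : f ≠ e := fun h => hf.2 (h ▸ mem_insert _ _)
  have hfH : f ∉ H := fun h => hf.2 (mem_insert_of_mem _ h)
  have hfNE : f ∈ N.E \ H := ⟨hNE ▸ (⟨hf.1, hfe⟩ : f ∈ M.E \ {e}), hfH⟩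
  have hNcl : N.closure (insert f H) = N.E :=
    ((aux_hyperplane_iff hHf.subset_ground).mp ⟨hHf, hHne, hHmax⟩).2.2 f hfNE
  have hind : M.Indep (insert f (insert e H)) := by
    rw [hMi.insert_indep_iff_of_notMem hf.2]
    exact ⟨hf.1, by rw [hcl]; exact hf.2⟩
  refine subset_antisymm (M.closure_subset_ground _) fun g hg => ?_
  by_cases hgmem : g ∈ insert f (insert e H)
  · exact M.subset_closure _ (insert_subset hf.1 hiE) hgmem
  have hge : g ≠ e := fun h => hgmem (h ▸ mem_insert_of_mem _ (mem_insert _ _))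
  have hgf : g ≠ f := fun h => hgmem (h ▸ mem_insert _ _)
  have hgH : g ∉ H := fun h => hgmem (mem_insert_of_mem _ (mem_insert_of_mem _ h))
  have hgN : g ∈ N.closure (insert f H) := by
    rw [hNcl, hNE]; exact ⟨hg, hge⟩
  have hNfi : N.Indep (insert f H) := by
    refine (hNI _).mpr ⟨?_, by rw [insert_comm]; exact hind⟩
    simp only [mem_insert_iff]
    rintro (h | h)
    · exact hfe h.symm
    · exact heH h
  have hdepN : N.Dep (insert g (insert f H)) := by
    rcases hNfi.mem_closure_iff.mp hgN with h | h
    · exact h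
    · rcases h with h | h
      · exact absurd h hgf
      · exact absurd h hgH
  have hnotind : ¬ M.Indep (insert e (insert g (insert f H))) := by
    intro hi
    refine hdepN.not_indep ((hNI _).mpr ⟨?_, hi⟩)
    simp only [mem_insert_iff]
    rintro (h | h | h)
    · exact hge h.symm
    · exact hfe h.symm
    · exact heH h
  rw [hind.mem_closure_iff']
  refine ⟨hg, fun hgi => absurd ?_ hnotind⟩
  rwa [insert_comm e g, insert_comm e f]

end Matroid

/-- If `M` has rank `r ≥ 2`, no loops, and every single-element contraction of `M` has
at least `k` independent hyperplanes, then `M` has at least `n * k / (r - 1)`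
independent hyperplanes. -/
theorem count_indepHyperplanes_of_contractions (M : Matroid α) [M.Finite] (r k : ℕ)
    (hr : M.HasRank r) (hr2 : 2 ≤ r) (hl : M.Loopless')
    (hk : ∀ e ∈ M.E, ∀ N : Matroid α, M.IsContractElem N e →
      k ≤ {H | N.IndepHyperplane H}.ncard) :
    (M.E.ncard : ℚ) * k / ((r : ℚ) - 1) ≤ ({H | M.IndepHyperplane H}.ncard : ℚ) := by
  classical
  have hEfin : M.E.Finite := M.ground_finite
  set 𝓗 : Set (Set α) := {H | M.IndepHyperplane H} with h𝓗
  have h𝓗fin : 𝓗.Finite := by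
    refine hEfin.finite_subsets.subset fun H hH => ?_
    exact (Matroid.aux_indepHyperplane_ncard hr hH).1
  set EF : Finset α := hEfin.toFinset with hEF
  set HF : Finset (Set α) := h𝓗fin.toFinset with hHF
  -- step 1: each element lies in at least `k` independent hyperplanes
  have step1 : ∀ e ∈ EF, k ≤ (HF.filter (fun H => e ∈ H)).card := by
    intro e heEF
    have he : e ∈ M.E := by rwa [hEF, Set.Finite.mem_toFinset] at heEF
    obtain ⟨N, hN⟩ := M.aux_exists_isContractElem (hl e he)
    have hkN : k ≤ {H | N.IndepHyperplane H}.ncard := hk e he N hN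
    set S : Set (Set α) := {H | N.IndepHyperplane H} with hS
    have hinj : Set.InjOn (insert e) S := by
      intro H₁ h₁ H₂ h₂ hins
      have he₁ : e ∉ H₁ := ((hN.2 H₁).mp h₁.2).1
      have he₂ : e ∉ H₂ := ((hN.2 H₂).mp h₂.2).1
      rw [← insert_diff_self_of_notMem he₁, ← insert_diff_self_of_notMem he₂, hins]
    have himg : insert e '' S ⊆ ↑(HF.filter (fun H => e ∈ H)) := by
      rintro _ ⟨H, hH, rfl⟩
      simp only [Finset.coe_filter, Set.mem_setOf_eq, hHF, Set.Finite.mem_toFinset]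
      exact ⟨Matroid.aux_contract_indepHyperplane he hN hH, mem_insert _ _⟩
    calc k ≤ S.ncard := hkN
      _ = (insert e '' S).ncard := (Set.ncard_image_of_injOn hinj).symm
      _ ≤ (↑(HF.filter (fun H => e ∈ H)) : Set (Set α)).ncard :=
          Set.ncard_le_ncard himg (Finset.finite_toSet _)
      _ = (HF.filter (fun H => e ∈ H)).card := Set.ncard_coe_finset _
  -- step 3: each independent hyperplane contains exactly `r - 1` ground elements
  have step3 : ∀ H ∈ HF, (EF.filter (fun e => e ∈ H)).card = r - 1 := by
    intro H hHmem
    have hH : M.IndepHyperplane H := by rwa [hHF, Set.Finite.mem_toFinset] at hHmem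
    obtain ⟨hHE, hHfin, hHcard⟩ := Matroid.aux_indepHyperplane_ncard hr hH
    have hset : (↑(EF.filter (fun e => e ∈ H)) : Set α) = H := by
      ext x
      simp only [Finset.coe_filter, Set.mem_setOf_eq, hEF, Set.Finite.mem_toFinset]
      exact ⟨fun h => h.2, fun h => ⟨hHE h, h⟩⟩
    have : (EF.filter (fun e => e ∈ H)).card = H.ncard := by
      rw [← Set.ncard_coe_finset, hset]
    omega
  -- double counting
  have hdouble : ∑ e ∈ EF, (HF.filter (fun H => e ∈ H)).card
      = ∑ H ∈ HF, (EF.filter (fun e => e ∈ H)).card := by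
    simp_rw [Finset.card_filter]
    exact Finset.sum_comm
  have hmain : M.E.ncard * k ≤ 𝓗.ncard * (r - 1) := by
    have h1 : EF.card * k ≤ ∑ e ∈ EF, (HF.filter (fun H => e ∈ H)).card := by
      calc EF.card * k = ∑ _e ∈ EF, k := by rw [Finset.sum_const, smul_eq_mul]
        _ ≤ _ := Finset.sum_le_sum step1
    have h2 : ∑ H ∈ HF, (EF.filter (fun e => e ∈ H)).card = HF.card * (r - 1) := by
      rw [Finset.sum_congr rfl step3, Finset.sum_const, smul_eq_mul]
    have hEcard : EF.card = M.E.ncard := by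
      rw [hEF, Set.ncard_eq_toFinset_card _ hEfin]
    have hHcard : HF.card = 𝓗.ncard := by
      rw [hHF, Set.ncard_eq_toFinset_card _ h𝓗fin]
    calc M.E.ncard * k = EF.card * k := by rw [hEcard]
      _ ≤ ∑ e ∈ EF, (HF.filter (fun H => e ∈ H)).card := h1
      _ = ∑ H ∈ HF, (EF.filter (fun e => e ∈ H)).card := hdouble
      _ = HF.card * (r - 1) := h2
      _ = 𝓗.ncard * (r - 1) := by rw [hHcard]
  -- conclude over ℚ
  have hrpos : (0 : ℚ) < (r : ℚ) - 1 := by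
    have : (2 : ℚ) ≤ (r : ℚ) := by exact_mod_cast hr2
    linarith
  rw [div_le_iff₀ hrpos]
  have hcast : ((r : ℚ) - 1) = ((r - 1 : ℕ) : ℚ) := by
    have : 1 ≤ r := by omega
    push_cast [this]
    ring
  rw [hcast]
  exact_mod_cast hmain
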